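/- Let g ∈ A *_C B be an element whose normal presentation g = z₁⋯z_j c (j ≥ 1) ends with a syllable z_j ∈ X (i.e. an A-syllable). Then for all b, b' ∈ B, ‖b⁻¹ g b'‖ ≥ d(b', C), where ‖·‖ is the word norm with respect to S_A ∪ S_B and d(b', C) = inf{d(b', c'') : c'' ∈ C}. -/

import Mathlib

/-- The word norm of `g` with respect to the generating set `S`. -/
noncomputable def wordNorm {G : Type*} [Group G] (S : Set G) (g : G) : ℕ :=
  sInf {k : ℕ | ∃ l : List G, l.length = k ∧ (∀ x ∈ l, x ∈ S) ∧ l.prod = g}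

/-- The word metric on `G` associated with the generating set `S`. -/
noncomputable def wordDist {G : Type*} [Group G] (S : Set G) (g h : G) : ℝ :=
  (wordNorm S (g⁻¹ * h) : ℝ)

/-- `G` is the amalgamated free product `A *_C B` of its subgroups `A` and `B`
over the common subgroup `C`: `A` and `B` generate `G`, and any pair of
homomorphisms on `A` and `B` agreeing on `C` extends to `G` (this universal
property, together with the generation condition, characterizes `A *_C B`). -/
def IsAmalgamatedProduct (G : Type*) [Group G] (A B C : Subgroup G) : Prop :=
  C ≤ A ∧ C ≤ B ∧ Subgroup.closure ((A : Set G) ∪ (B : Set G)) = ⊤ ∧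
  ∀ {H : Type*} [Group H] (fA : A →* H) (fB : B →* H),
    (∀ (x : G) (hxA : x ∈ A) (hxB : x ∈ B), x ∈ C → fA ⟨x, hxA⟩ = fB ⟨x, hxB⟩) →
    ∃ f : G →* H, (∀ a : A, f ↑a = fA a) ∧ (∀ b : B, f ↑b = fB b)


namespace AmalgAux


open Monoid Monoid.PushoutI


variable {G : Type*} [Group G] {A B C : Subgroup G}

theorem mul_c_notC {x c : G} (hx : x ∉ C) (hc : c ∈ C) : x * c ∉ C := fun h => hx (by
  have := C.mul_mem h (C.inv_mem hc); simpa using this)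

theorem c_mul_notC {x c : G} (hx : x ∉ C) (hc : c ∈ C) : c * x ∉ C := fun h => hx (by
  have := C.mul_mem (C.inv_mem hc) h; simpa using this)

theorem inv_notC {x : G} (hx : x ∉ C) : x⁻¹ ∉ C := fun h => hx (by
  have := C.inv_mem h; simpa using this)

/-- Products of nonempty alternating words. -/
inductive AltW (A B C : Subgroup G) : Bool → Bool → G → Prop
  | baseA {a : G} (ha : a ∈ A) (hc : a ∉ C) : AltW A B C true true a
  | baseB {b : G} (hb : b ∈ B) (hc : b ∉ C) : AltW A B C false false b
  | consA {a : G} {e : Bool} {x : G} (ha : a ∈ A) (hc : a ∉ C)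
      (hx : AltW A B C false e x) : AltW A B C true e (a * x)
  | consB {b : G} {e : Bool} {x : G} (hb : b ∈ B) (hc : b ∉ C)
      (hx : AltW A B C true e x) : AltW A B C false e (b * x)

theorem AltW.mul_c {s e : Bool} {x c : G} (h : AltW A B C s e x) (hc : c ∈ C)
    (hCA : C ≤ A) (hCB : C ≤ B) : AltW A B C s e (x * c) := by
  induction h with
  | baseA ha hna => exact .baseA (A.mul_mem ha (hCA hc)) (mul_c_notC hna hc)
  | baseB hb hnb => exact .baseB (B.mul_mem hb (hCB hc)) (mul_c_notC hnb hc)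
  | consA ha hna _ ih => rw [mul_assoc]; exact .consA ha hna ih
  | consB hb hnb _ ih => rw [mul_assoc]; exact .consB hb hnb ih

theorem AltW.c_mul {s e : Bool} {x c : G} (h : AltW A B C s e x) (hc : c ∈ C)
    (hCA : C ≤ A) (hCB : C ≤ B) : AltW A B C s e (c * x) := by
  cases h with
  | baseA ha hna => exact .baseA (A.mul_mem (hCA hc) ha) (c_mul_notC hna hc)
  | baseB hb hnb => exact .baseB (B.mul_mem (hCB hc) hb) (c_mul_notC hnb hc)
  | consA ha hna hx =>
      rw [← mul_assoc]
      exact .consA (A.mul_mem (hCA hc) ha) (c_mul_notC hna hc) hx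
  | consB hb hnb hx =>
      rw [← mul_assoc]
      exact .consB (B.mul_mem (hCB hc) hb) (c_mul_notC hnb hc) hx

/-- Concatenation of alternating words whose sides match up. -/
theorem AltW.append {s e e' : Bool} {x y : G} (hx : AltW A B C s e x)
    (hy : AltW A B C (!e) e' y) : AltW A B C s e' (x * y) := by
  induction hx with
  | baseA ha hna => exact .consA ha hna hy
  | baseB hb hnb => exact .consB hb hnb hy
  | consA ha hna _ ih => rw [mul_assoc]; exact .consA ha hna (ih hy)
  | consB hb hnb _ ih => rw [mul_assoc]; exact .consB hb hnb (ih hy)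

theorem AltW.inv {s e : Bool} {x : G} (h : AltW A B C s e x) : AltW A B C e s x⁻¹ := by
  induction h with
  | baseA ha hna => exact .baseA (A.inv_mem ha) (inv_notC hna)
  | baseB hb hnb => exact .baseB (B.inv_mem hb) (inv_notC hnb)
  | consA ha hna _ ih =>
      rw [mul_inv_rev]
      exact ih.append (.baseA (A.inv_mem ha) (inv_notC hna))
  | consB hb hnb _ ih =>
      rw [mul_inv_rev]
      exact ih.append (.baseB (B.inv_mem hb) (inv_notC hnb))

/-- Multiplying an alternating word ending with an `A`-syllable on the right by an
element of `A`. -/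
theorem AltW.mul_a {s e : Bool} {x a : G} (h : AltW A B C s e x) (he : e = true)
    (ha : a ∈ A) (hCA : C ≤ A) (hCB : C ≤ B) :
    AltW A B C s true (x * a) ∨ AltW A B C s false (x * a) ∨ (s = true ∧ x * a ∈ C) := by
  induction h with
  | @baseA a₁ ha₁ hna₁ =>
      by_cases hC : a₁ * a ∈ C
      · exact Or.inr (Or.inr ⟨rfl, hC⟩)
      · exact Or.inl (.baseA (A.mul_mem ha₁ ha) hC)
  | baseB hb hnb => exact absurd he (by simp)
  | @consA a₁ e₁ x₁ ha₁ hna₁ hx ih =>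
      rcases ih he with h' | h' | h'
      · exact Or.inl (by rw [mul_assoc]; exact .consA ha₁ hna₁ h')
      · exact Or.inr (Or.inl (by rw [mul_assoc]; exact .consA ha₁ hna₁ h'))
      · exact absurd h'.1 (by simp)
  | @consB b₁ e₁ x₁ hb₁ hnb₁ hx ih =>
      rcases ih he with h' | h' | h'
      · exact Or.inl (by rw [mul_assoc]; exact .consB hb₁ hnb₁ h')
      · exact Or.inr (Or.inl (by rw [mul_assoc]; exact .consB hb₁ hnb₁ h'))
      · refine Or.inr (Or.inl ?_)
        rw [mul_assoc]
        exact .baseB (B.mul_mem hb₁ (hCB h'.2)) (mul_c_notC hnb₁ h'.2)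

/-- Peeling: a word ending with a `B`-syllable is either a single `B`-syllable or an
`A`-ending word times an element of `B`. -/
theorem AltW.peel {s e : Bool} {y : G} (h : AltW A B C s e y) (he : e = false) :
    (s = false ∧ y ∈ B) ∨
      ∃ w b', AltW A B C s true w ∧ b' ∈ B ∧ y = w * b' := by
  induction h with
  | baseA ha hna => exact absurd he (by simp)
  | baseB hb hnb => exact Or.inl ⟨rfl, hb⟩
  | @consA a₁ e₁ x₁ ha₁ hna₁ hx ih =>
      rcases ih he with ⟨_, hxB⟩ | ⟨w, b', hw, hb', rfl⟩
      · exact Or.inr ⟨a₁, x₁, .baseA ha₁ hna₁, hxB, rfl⟩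
      · exact Or.inr ⟨a₁ * w, b', .consA ha₁ hna₁ hw, hb', (mul_assoc _ _ _).symm⟩
  | @consB b₁ e₁ x₁ hb₁ hnb₁ hx ih =>
      rcases ih he with ⟨h', _⟩ | ⟨w, b', hw, hb', rfl⟩
      · exact absurd h' (by simp)
      · exact Or.inr ⟨b₁ * w, b', .consB hb₁ hnb₁ hw, hb', (mul_assoc _ _ _).symm⟩


section Push
/-- The two-element family of groups `A`, `B`. -/
def fam (A B : Subgroup G) : Bool → Type _
  | true => ↥A
  | false => ↥B

instance famGroup (A B : Subgroup G) : ∀ i, Group (fam A B i)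
  | true => inferInstanceAs (Group ↥A)
  | false => inferInstanceAs (Group ↥B)

/-- The base maps `C →* A`, `C →* B`. -/
def famMap {A B C : Subgroup G} (hCA : C ≤ A) (hCB : C ≤ B) : ∀ i, ↥C →* fam A B i
  | true => Subgroup.inclusion hCA
  | false => Subgroup.inclusion hCB

theorem famMap_injective {A B C : Subgroup G} (hCA : C ≤ A) (hCB : C ≤ B) :
    ∀ i, Function.Injective (famMap hCA hCB i)
  | true => Subgroup.inclusion_injective hCA
  | false => Subgroup.inclusion_injective hCB

theorem reduced_cons {ι : Type*} {H : Type*} [Group H] {M : ι → Type*} [∀ i, Group (M i)]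
    {φ : ∀ i, H →* M i} {i : ι} (m : M i) (w : Monoid.CoprodI.Word M)
    (h2 : w.fstIdx ≠ some i) (h1 : m ≠ 1)
    (hm : m ∉ (φ i).range) (hw : Reduced φ w) :
    Reduced φ (Monoid.CoprodI.Word.cons m w h2 h1) := by
  intro g hg
  rw [Monoid.CoprodI.Word.cons_toList, List.mem_cons] at hg
  rcases hg with rfl | hg
  · exact hm
  · exact hw g hg


instance famCountable {A B : Subgroup G} [Countable ↥A] [Countable ↥B] :
    ∀ i, Countable (fam A B i)
  | true => inferInstanceAs (Countable ↥A)
  | false => inferInstanceAs (Countable ↥B)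

instance (α : Type*) [Countable α] : Countable (FreeMonoid α) :=
  inferInstanceAs (Countable (List α))

theorem pushoutI_countable {A B C : Subgroup G} [Countable ↥A] [Countable ↥B]
    [Countable ↥C] (hCA : C ≤ A) (hCB : C ≤ B) :
    Countable (PushoutI (famMap hCA hCB)) := by
  have h1 : Countable (Monoid.CoprodI (fam A B)) :=
    inferInstanceAs (Countable (Quotient _))
  have h2 : Countable (Monoid.Coprod (Monoid.CoprodI (fam A B)) ↥C) :=
    inferInstanceAs (Countable (Quotient _))
  exact inferInstanceAs (Countable (Quotient _))

/-- Freeness: an alternating word is never in `C`. -/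
theorem AltW.not_mem_C {A B C : Subgroup G} (hG : IsAmalgamatedProduct G A B C)
    (hcA : Countable ↥A) (hcB : Countable ↥B)
    {s e : Bool} {x : G} (h : AltW A B C s e x) : x ∉ C := by
  obtain ⟨hCA, hCB, -, huniv⟩ := hG
  haveI hcC : Countable ↥C := Function.Injective.countable (Subgroup.inclusion_injective hCA)
  haveI hP : Countable (PushoutI (famMap hCA hCB)) := pushoutI_countable hCA hCB
  have compat : ∀ (y : G) (hyA : y ∈ A) (hyB : y ∈ B), y ∈ C →
      of (φ := famMap hCA hCB) true ⟨y, hyA⟩ = of (φ := famMap hCA hCB) false ⟨y, hyB⟩ := by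
    intro x hxA hxB hxC
    have h1 : of (φ := famMap hCA hCB) true (famMap hCA hCB true ⟨x, hxC⟩) =
        base (famMap hCA hCB) ⟨x, hxC⟩ := of_apply_eq_base _ _ _
    have h2 : of (φ := famMap hCA hCB) false (famMap hCA hCB false ⟨x, hxC⟩) =
        base (famMap hCA hCB) ⟨x, hxC⟩ := of_apply_eq_base _ _ _
    have e1 : famMap hCA hCB true ⟨x, hxC⟩ = (⟨x, hxA⟩ : A) := rfl
    have e2 : famMap hCA hCB false ⟨x, hxC⟩ = (⟨x, hxB⟩ : B) := rfl
    rw [e1] at h1; rw [e2] at h2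
    rw [h1, h2]
  obtain ⟨f, hfA, hfB⟩ := huniv
    (Shrink.mulEquiv.symm.toMonoidHom.comp (of (φ := famMap hCA hCB) true))
    (Shrink.mulEquiv.symm.toMonoidHom.comp (of (φ := famMap hCA hCB) false))
    (fun y hyA hyB hyC => congrArg _ (compat y hyA hyB hyC))
  let φ : G →* PushoutI (famMap hCA hCB) := Shrink.mulEquiv.toMonoidHom.comp f
  have hφA : ∀ a : ↥A, φ ↑a = of (φ := famMap hCA hCB) true a := by
    intro a
    show Shrink.mulEquiv (f ↑a) = _
    rw [hfA]
    exact Shrink.mulEquiv.apply_symm_apply _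
  have hφB : ∀ b : ↥B, φ ↑b = of (φ := famMap hCA hCB) false b := by
    intro b
    show Shrink.mulEquiv (f ↑b) = _
    rw [hfB]
    exact Shrink.mulEquiv.apply_symm_apply _
  have key : ∀ {s e : Bool} {x : G}, AltW A B C s e x →
      ∃ w : Monoid.CoprodI.Word (fam A B), Reduced (famMap hCA hCB) w ∧
        w.fstIdx = some s ∧ ofCoprodI w.prod = φ x := by
    intro s e x h
    induction h with
    | @baseA a ha hc =>
        have hne : (⟨a, ha⟩ : A) ≠ 1 := by
          intro h1
          have h2 : a = (1 : G) := congrArg Subtype.val h1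
          exact hc (by rw [h2]; exact C.one_mem)
        refine ⟨Monoid.CoprodI.Word.cons (i := true) (⟨a, ha⟩ : A) .empty (by simp
          [Monoid.CoprodI.Word.fstIdx, Monoid.CoprodI.Word.empty]) hne, ?_, ?_, ?_⟩
        · refine reduced_cons _ _ _ _ ?_ (by intro g hg; simp [Monoid.CoprodI.Word.empty] at hg)
          rintro ⟨⟨c, hcm⟩, hc'⟩
          refine hc ?_
          obtain rfl := (congrArg Subtype.val hc' :)
          exact hcm
        · rfl
        · erw [Monoid.CoprodI.Word.prod_cons, map_mul, ofCoprodI_of]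
          have h1 : φ a = of (φ := famMap hCA hCB) true ⟨a, ha⟩ := hφA ⟨a, ha⟩
          rw [h1]
          simp [Monoid.CoprodI.Word.prod, Monoid.CoprodI.Word.empty]
    | @baseB b hb hc =>
        have hne : (⟨b, hb⟩ : B) ≠ 1 := by
          intro h1
          have h2 : b = (1 : G) := congrArg Subtype.val h1
          exact hc (by rw [h2]; exact C.one_mem)
        refine ⟨Monoid.CoprodI.Word.cons (i := false) (⟨b, hb⟩ : B) .empty (by simp
          [Monoid.CoprodI.Word.fstIdx, Monoid.CoprodI.Word.empty]) hne, ?_, ?_, ?_⟩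
        · refine reduced_cons _ _ _ _ ?_ (by intro g hg; simp [Monoid.CoprodI.Word.empty] at hg)
          rintro ⟨⟨c, hcm⟩, hc'⟩
          refine hc ?_
          obtain rfl := (congrArg Subtype.val hc' :)
          exact hcm
        · rfl
        · erw [Monoid.CoprodI.Word.prod_cons, map_mul, ofCoprodI_of]
          have h1 : φ b = of (φ := famMap hCA hCB) false ⟨b, hb⟩ := hφB ⟨b, hb⟩
          rw [h1]
          simp [Monoid.CoprodI.Word.prod, Monoid.CoprodI.Word.empty]
    | @consA a e₁ x₁ ha hc hx ih =>
        obtain ⟨w, hred, hfst, hprod⟩ := ih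
        have hne : (⟨a, ha⟩ : A) ≠ 1 := by
          intro h1
          have h2 : a = (1 : G) := congrArg Subtype.val h1
          exact hc (by rw [h2]; exact C.one_mem)
        have hidx : w.fstIdx ≠ some true := by rw [hfst]; simp
        refine ⟨Monoid.CoprodI.Word.cons (i := true) (⟨a, ha⟩ : A) w hidx hne, ?_, ?_, ?_⟩
        · refine reduced_cons _ _ _ _ ?_ hred
          rintro ⟨⟨c, hcm⟩, hc'⟩
          refine hc ?_
          obtain rfl := (congrArg Subtype.val hc' :)
          exact hcm
        · exact rfl
        · have h1 : φ (a * x₁) = φ a * φ x₁ := map_mul φ _ _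
          have h2 : φ a = of (φ := famMap hCA hCB) true ⟨a, ha⟩ := hφA ⟨a, ha⟩
          erw [Monoid.CoprodI.Word.prod_cons, map_mul, ofCoprodI_of, h1, h2, hprod]
    | @consB b e₁ x₁ hb hc hx ih =>
        obtain ⟨w, hred, hfst, hprod⟩ := ih
        have hne : (⟨b, hb⟩ : B) ≠ 1 := by
          intro h1
          have h2 : b = (1 : G) := congrArg Subtype.val h1
          exact hc (by rw [h2]; exact C.one_mem)
        have hidx : w.fstIdx ≠ some false := by rw [hfst]; simp
        refine ⟨Monoid.CoprodI.Word.cons (i := false) (⟨b, hb⟩ : B) w hidx hne, ?_, ?_, ?_⟩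
        · refine reduced_cons _ _ _ _ ?_ hred
          rintro ⟨⟨c, hcm⟩, hc'⟩
          refine hc ?_
          obtain rfl := (congrArg Subtype.val hc' :)
          exact hcm
        · simp [Monoid.CoprodI.Word.fstIdx, Monoid.CoprodI.Word.cons]
        · have h1 : φ (b * x₁) = φ b * φ x₁ := map_mul φ _ _
          have h2 : φ b = of (φ := famMap hCA hCB) false ⟨b, hb⟩ := hφB ⟨b, hb⟩
          erw [Monoid.CoprodI.Word.prod_cons, map_mul, ofCoprodI_of, h1, h2, hprod]
  intro hxC
  obtain ⟨w, hred, hfst, hprod⟩ := key h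
  have hmem : ofCoprodI w.prod ∈ (base (famMap hCA hCB)).range := by
    rw [hprod]
    have h1 : φ x = of (φ := famMap hCA hCB) true (famMap hCA hCB true ⟨x, hxC⟩) :=
      hφA ⟨x, hCA hxC⟩
    rw [h1, of_apply_eq_base]
    exact ⟨_, rfl⟩
  have := Reduced.eq_empty_of_mem_range (famMap_injective hCA hCB) hred hmem
  rw [this] at hfst
  simp [Monoid.CoprodI.Word.fstIdx, Monoid.CoprodI.Word.empty] at hfst


end Push

section Wlayer

variable {G : Type*} [Group G] {A B C : Subgroup G}

/-- Elements whose normal form starts with an `A`-syllable. -/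
def IsW (A B C : Subgroup G) (x : G) : Prop :=
  ∃ w b₀, AltW A B C true true w ∧ b₀ ∈ B ∧ x = w * b₀

variable (hG : IsAmalgamatedProduct G A B C) (hcA : Countable ↥A) (hcB : Countable ↥B)

include hG hcA hcB in
theorem AltW.not_mem_B {s : Bool} {x : G} (h : AltW A B C s true x) (hx : x ∈ B) : False := by
  by_cases hxi : x⁻¹ ∈ C
  · exact (h.not_mem_C hG hcA hcB) (by simpa using C.inv_mem hxi)
  · have h1 : AltW A B C s false (x * x⁻¹) := h.append (.baseB (B.inv_mem hx) hxi)
    exact (h1.not_mem_C hG hcA hcB) (by simpa using C.one_mem)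

include hG hcA hcB in
theorem not_isW_of_mem_B {x : G} (hx : x ∈ B) : ¬ IsW A B C x := by
  rintro ⟨w, b₀, hw, hb₀, rfl⟩
  have hwB : w ∈ B := by
    have : w * b₀ * b₀⁻¹ ∈ B := B.mul_mem hx (B.inv_mem hb₀)
    simpa using this
  exact hw.not_mem_B hG hcA hcB hwB

include hG hcA hcB in
theorem not_isW_of_WB {w' b₀' : G} (hw' : AltW A B C false true w') (hb₀' : b₀' ∈ B) :
    ¬ IsW A B C (w' * b₀') := by
  rintro ⟨w, b₀, hw, hb₀, heq⟩
  have hkey : AltW A B C true true (w'⁻¹ * w) := hw'.inv.append hw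
  have h2 : w'⁻¹ * w = b₀' * b₀⁻¹ := by
    have h3 : w'⁻¹ * (w' * b₀') = w'⁻¹ * (w * b₀) := by rw [heq]
    rw [← mul_assoc, ← mul_assoc, inv_mul_cancel, one_mul] at h3
    rw [h3, mul_assoc, mul_inv_cancel, mul_one]
  exact hkey.not_mem_B hG hcA hcB (h2 ▸ B.mul_mem hb₀' (B.inv_mem hb₀))

/-- Every element is in `B` or of the form (alternating word ending in `A`-syllable) * `B`. -/
def NFClass (A B C : Subgroup G) (x : G) : Prop :=
  x ∈ B ∨ ∃ (s : Bool) (w b₀ : G), AltW A B C s true w ∧ b₀ ∈ B ∧ x = w * b₀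

theorem NFClass.mul_a (hCA : C ≤ A) (hCB : C ≤ B) {x a : G} (hx : NFClass A B C x)
    (ha : a ∈ A) : NFClass A B C (x * a) := by
  rcases hx with hxB | ⟨s, w, b₀, hw, hb₀, rfl⟩
  · by_cases haC : a ∈ C
    · exact Or.inl (B.mul_mem hxB (hCB haC))
    · by_cases hxC : x ∈ C
      · exact Or.inr ⟨true, x * a, 1, (AltW.baseA ha haC).c_mul hxC hCA hCB, B.one_mem,
          (mul_one _).symm⟩
      · exact Or.inr ⟨false, x * a, 1, (AltW.baseB hxB hxC).append (.baseA ha haC),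
          B.one_mem, (mul_one _).symm⟩
  · by_cases hb₀C : b₀ ∈ C
    · have hw2 : AltW A B C s true (w * b₀) := hw.mul_c hb₀C hCA hCB
      rcases hw2.mul_a rfl ha hCA hCB with h' | h' | h'
      · exact Or.inr ⟨s, w * b₀ * a, 1, h', B.one_mem, (mul_one _).symm⟩
      · rcases h'.peel rfl with ⟨_, hB⟩ | ⟨w', b', hw'', hb', heq⟩
        · exact Or.inl hB
        · exact Or.inr ⟨s, w', b', hw'', hb', heq⟩
      · exact Or.inl (hCB h'.2)
    · by_cases haC : a ∈ C
      · exact Or.inr ⟨s, w, b₀ * a, hw, B.mul_mem hb₀ (hCB haC), (mul_assoc _ _ _)⟩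
      · have h1 : AltW A B C false true (b₀ * a) := (AltW.baseB hb₀ hb₀C).append
          (.baseA ha haC)
        exact Or.inr ⟨s, w * (b₀ * a), 1, hw.append h1, B.one_mem,
          by rw [mul_one, mul_assoc]⟩

theorem NFClass.mul_b {x b : G} (hx : NFClass A B C x) (hb : b ∈ B) :
    NFClass A B C (x * b) := by
  rcases hx with hxB | ⟨s, w, b₀, hw, hb₀, rfl⟩
  · exact Or.inl (B.mul_mem hxB hb)
  · exact Or.inr ⟨s, w, b₀ * b, hw, B.mul_mem hb₀ hb, (mul_assoc _ _ _)⟩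

theorem nfclass_all (hCA : C ≤ A) (hCB : C ≤ B)
    (htop : Subgroup.closure ((A : Set G) ∪ (B : Set G)) = ⊤) (x : G) :
    NFClass A B C x := by
  have hx : x ∈ Subgroup.closure ((A : Set G) ∪ (B : Set G)) := htop ▸ Subgroup.mem_top x
  rw [← Subgroup.mem_toSubmonoid, Subgroup.closure_toSubmonoid] at hx
  obtain ⟨l, hl, rfl⟩ := Submonoid.exists_list_of_mem_closure hx
  clear hx
  induction l using List.reverseRecOn with
  | nil => exact Or.inl B.one_mem
  | append_singleton l y ih =>
      rw [List.prod_append, List.prod_singleton]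
      have hy : y ∈ (A : Set G) ∪ (B : Set G) := by
        rcases hl y (by simp) with h | h
        · exact h
        · rw [Set.mem_inv] at h
          rcases h with h | h
          · exact Or.inl (by simpa using A.inv_mem h)
          · exact Or.inr (by simpa using B.inv_mem h)
      have hprev : NFClass A B C l.prod := ih (fun z hz => hl z (by simp [hz]))
      rcases hy with h | h
      · exact hprev.mul_a hCA hCB h
      · exact hprev.mul_b h

include hG hcA hcB in
theorem not_isW_mul_a {x a : G} (hx : ¬ IsW A B C x) (hxC : x ∉ C) (ha : a ∈ A) :
    ¬ IsW A B C (x * a) := by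
  have hCA : C ≤ A := hG.1
  have hCB : C ≤ B := hG.2.1
  have htop := hG.2.2.1
  rcases nfclass_all hCA hCB htop x with hxB | ⟨s, w, b₀, hw, hb₀, rfl⟩
  · by_cases haC : a ∈ C
    · exact not_isW_of_mem_B hG hcA hcB (B.mul_mem hxB (hCB haC))
    · have h1 : AltW A B C false true (x * a) := (AltW.baseB hxB hxC).append (.baseA ha haC)
      intro hW
      exact not_isW_of_WB hG hcA hcB h1 B.one_mem (by rwa [mul_one])
  · cases s with
    | true => exact absurd ⟨w, b₀, hw, hb₀, rfl⟩ hx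
    | false =>
        by_cases hb₀C : b₀ ∈ C
        · have hw2 : AltW A B C false true (w * b₀) := hw.mul_c hb₀C hCA hCB
          rcases hw2.mul_a rfl ha hCA hCB with h' | h' | h'
          · intro hW
            refine not_isW_of_WB hG hcA hcB h' B.one_mem ?_
            rwa [mul_one]
          · rcases h'.peel rfl with ⟨_, hB⟩ | ⟨w', b', hw'', hb', heq⟩
            · exact not_isW_of_mem_B hG hcA hcB hB
            · rw [heq]
              exact not_isW_of_WB hG hcA hcB hw'' hb'
          · exact absurd h'.1 (by simp)
        · by_cases haC : a ∈ C
          · rw [mul_assoc]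
            exact not_isW_of_WB hG hcA hcB hw (B.mul_mem hb₀ (hCB haC))
          · have h1 : AltW A B C false true (b₀ * a) := (AltW.baseB hb₀ hb₀C).append
              (.baseA ha haC)
            have h2 : AltW A B C false true (w * (b₀ * a)) := hw.append h1
            rw [mul_assoc]
            intro hW
            exact not_isW_of_WB hG hcA hcB h2 B.one_mem (by rwa [mul_one])

include hG hcA hcB in
theorem isW_crossing {x a : G} (hx : IsW A B C x) (ha : a ∈ A)
    (hxa : ¬ IsW A B C (x * a)) : x * a ∈ C := by
  by_contra hC
  have := not_isW_mul_a hG hcA hcB hxa hC (A.inv_mem ha)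
  rw [mul_assoc, mul_inv_cancel, mul_one] at this
  exact this hx

theorem isW_mul_b {x b : G} (hx : IsW A B C x) (hb : b ∈ B) : IsW A B C (x * b) := by
  obtain ⟨w, b₀, hw, hb₀, rfl⟩ := hx
  exact ⟨w, b₀ * b, hw, B.mul_mem hb₀ hb, (mul_assoc _ _ _)⟩

include hG hcA hcB in
theorem crossing_list (l : List G) : ∀ (h : G), (∀ y ∈ l, y ∈ (A : Set G) ∪ (B : Set G)) →
    IsW A B C h → ¬ IsW A B C (h * l.prod) →
    ∃ l₂, l₂ <:+ l ∧ ∃ c'' ∈ C, c'' * l₂.prod = h * l.prod := by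
  induction l with
  | nil =>
      intro h _ hW hnW
      rw [List.prod_nil, mul_one] at hnW
      exact absurd hW hnW
  | cons s l ih =>
      intro h hmem hW hnW
      rw [List.prod_cons, ← mul_assoc] at hnW
      by_cases hWs : IsW A B C (h * s)
      · obtain ⟨l₂, hsuf, c'', hc'', heq⟩ := ih (h * s)
          (fun y hy => hmem y (List.mem_cons_of_mem _ hy)) hWs hnW
        exact ⟨l₂, hsuf.trans (List.suffix_cons s l), c'', hc'',
          by rw [List.prod_cons, ← mul_assoc]; exact heq⟩
      · rcases hmem s List.mem_cons_self with hsA | hsB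
        · have hC : h * s ∈ C := isW_crossing hG hcA hcB hW hsA hWs
          exact ⟨l, List.suffix_cons s l, h * s, hC, by rw [List.prod_cons, ← mul_assoc]⟩
        · exact absurd (isW_mul_b hW hsB) hWs

end Wlayer

section Assemble

variable {G : Type*} [Group G] {A B C : Subgroup G}

theorem countable_closure {S : Set G} (hS : S.Countable) :
    Countable ↥(Subgroup.closure S) := by
  haveI := hS.to_subtype
  haveI : Countable (FreeGroup ↥S) :=
    Function.Surjective.countable (f := FreeGroup.mk)
      (fun x => Quot.inductionOn x fun l => ⟨l, (FreeGroup.quot_mk_eq_mk).symm⟩)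
  have hrange : (FreeGroup.lift (fun s : ↥S => (s : G))).range = Subgroup.closure S := by
    rw [FreeGroup.range_lift_eq_closure, Subtype.range_coe]
  have hcr : Countable ↥(FreeGroup.lift (fun s : ↥S => (s : G))).range :=
    Function.Surjective.countable (MonoidHom.rangeRestrict_surjective _)
  rwa [hrange] at hcr

theorem alt_ofFn : ∀ (j : ℕ) (hj : 1 ≤ j) (z : Fin j → G) (side : Fin j → Bool),
    (∀ i, side i = true → z i ∈ A) → (∀ i, side i = false → z i ∈ B) →
    (∀ i, z i ∉ C) →
    (∀ i i' : Fin j, (i' : ℕ) = (i : ℕ) + 1 → side i' ≠ side i) →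
    AltW A B C (side ⟨0, by omega⟩) (side ⟨j - 1, Nat.sub_lt hj Nat.one_pos⟩) (List.ofFn z).prod := by
  intro j
  induction j with
  | zero => intro hj; exact absurd hj (by omega)
  | succ m ih =>
      intro _ z side hA hB hnotC halt
      rcases Nat.eq_zero_or_pos m with rfl | hm
      · have hz : (List.ofFn z).prod = z ⟨0, by omega⟩ := by
          simp [List.ofFn_succ]
        rw [hz]
        cases h0 : side ⟨0, by omega⟩ with
        | true => exact .baseA (hA _ h0) (hnotC _)
        | false => exact .baseB (hB _ h0) (hnotC _)
      · set z' : Fin m → G := fun i => z i.succ with hz'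
        set side' : Fin m → Bool := fun i => side i.succ with hside'
        have hA' : ∀ i, side' i = true → z' i ∈ A := fun i h => hA i.succ h
        have hB' : ∀ i, side' i = false → z' i ∈ B := fun i h => hB i.succ h
        have hnotC' : ∀ i, z' i ∉ C := fun i => hnotC i.succ
        have halt' : ∀ i i' : Fin m, (i' : ℕ) = (i : ℕ) + 1 → side' i' ≠ side' i := by
          intro i i' hii
          exact halt i.succ i'.succ (by simp [Fin.val_succ, hii])
        have hrec := ih hm z' side' hA' hB' hnotC' halt'
        have hsucc0 : side' ⟨0, by omega⟩ = side ⟨1, by omega⟩ := rfl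
        have hsucc1 : side' ⟨m - 1, by omega⟩ = side ⟨m, by omega⟩ := by
          have : (⟨m - 1, by omega⟩ : Fin m).succ = ⟨m, by omega⟩ := by
            apply Fin.ext; simp [Fin.val_succ]; omega
          rw [hside']
          simp only []
          rw [this]
        rw [hsucc0, hsucc1] at hrec
        have hgoal : (List.ofFn z).prod = z 0 * (List.ofFn z').prod := by
          rw [List.ofFn_succ, List.prod_cons]
        rw [hgoal]
        have hne : side ⟨1, by omega⟩ ≠ side ⟨0, by omega⟩ :=
          halt ⟨0, by omega⟩ ⟨1, by omega⟩ rfl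
        cases h0 : side ⟨0, by omega⟩ with
        | true =>
            have h1 : side ⟨1, by omega⟩ = false := by
              rw [h0] at hne; simpa using hne
            rw [h1] at hrec
            exact .consA (hA _ h0) (hnotC _) hrec
        | false =>
            have h1 : side ⟨1, by omega⟩ = true := by
              rw [h0] at hne; simpa using hne
            rw [h1] at hrec
            exact .consB (hB _ h0) (hnotC _) hrec

theorem isW_ginv_mul (hCA : C ≤ A) (hCB : C ≤ B) {s : Bool} {w c b : G}
    (hw : AltW A B C s true w) (hc : c ∈ C) (hb : b ∈ B) :
    IsW A B C ((w * c)⁻¹ * b) := by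
  have h1 : AltW A B C true s (c⁻¹ * w⁻¹) := (hw.inv).c_mul (C.inv_mem hc) hCA hCB
  cases s with
  | true =>
      exact ⟨c⁻¹ * w⁻¹, b, h1, hb, by rw [mul_inv_rev]⟩
  | false =>
      rcases h1.peel rfl with ⟨habs, _⟩ | ⟨w', b'', hw', hb'', heq⟩
      · exact absurd habs (by simp)
      · exact ⟨w', b'' * b, hw', B.mul_mem hb'' hb, by rw [mul_inv_rev, heq, mul_assoc]⟩

theorem exists_word_of_closure {S : Set G} (hsymm : ∀ s ∈ S, s⁻¹ ∈ S)
    (htop : Subgroup.closure S = ⊤) (x : G) :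
    ∃ l : List G, (∀ y ∈ l, y ∈ S) ∧ l.prod = x := by
  have hx : x ∈ Subgroup.closure S := htop ▸ Subgroup.mem_top x
  rw [← Subgroup.mem_toSubmonoid, Subgroup.closure_toSubmonoid] at hx
  obtain ⟨l, hl, rfl⟩ := Submonoid.exists_list_of_mem_closure hx
  refine ⟨l, fun y hy => ?_, rfl⟩
  rcases hl y hy with h | h
  · exact h
  · rw [Set.mem_inv] at h
    simpa using hsymm _ h

end Assemble


section WordNorm

variable {G : Type*} [Group G]

theorem wordNorm_le {S : Set G} (l : List G) (h : ∀ x ∈ l, x ∈ S) :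
    wordNorm S l.prod ≤ l.length :=
  Nat.sInf_le ⟨l, rfl, h, rfl⟩

theorem exists_min_word {S : Set G} {x : G}
    (hx : ∃ l : List G, (∀ y ∈ l, y ∈ S) ∧ l.prod = x) :
    ∃ l : List G, l.length = wordNorm S x ∧ (∀ y ∈ l, y ∈ S) ∧ l.prod = x := by
  obtain ⟨l0, h1, h2⟩ := hx
  have hne : {k : ℕ | ∃ l : List G, l.length = k ∧ (∀ y ∈ l, y ∈ S) ∧ l.prod = x}.Nonempty :=
    ⟨l0.length, l0, rfl, h1, h2⟩
  obtain ⟨l, hl, hm, hp⟩ := Nat.sInf_mem hne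
  exact ⟨l, hl, hm, hp⟩

end WordNorm

end AmalgAux

/-- Let `g ∈ A *_C B` be an element whose normal presentation
`g = z₁ ⋯ z_j c` (`j ≥ 1`, `c ∈ C`, syllables alternating between `A ∖ C`
and `B ∖ C`, with `side i = true` marking an `A`-syllable) ends with an
`A`-syllable `z_j`.  Then for all `b, b' ∈ B`,
`‖b⁻¹ g b'‖ ≥ d(b', C)`, where `‖·‖` is the word norm with respect to
`S_A ∪ S_B` and `d(b', C) = inf {d(b', c'') : c'' ∈ C}`. -/
theorem wordNorm_conj_ge_dist {G : Type*} [Group G] (A B C : Subgroup G)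
    (hG : IsAmalgamatedProduct G A B C)
    (SA SB : Set G) (hSAfin : SA.Finite) (hSBfin : SB.Finite)
    (hSAsymm : ∀ s ∈ SA, s⁻¹ ∈ SA) (hSBsymm : ∀ s ∈ SB, s⁻¹ ∈ SB)
    (hSAgen : Subgroup.closure SA = A) (hSBgen : Subgroup.closure SB = B)
    (j : ℕ) (hj : 1 ≤ j) (z : Fin j → G) (side : Fin j → Bool)
    (hA : ∀ i, side i = true → z i ∈ A) (hB : ∀ i, side i = false → z i ∈ B)
    (hnotC : ∀ i, z i ∉ C)
    (halt : ∀ i i' : Fin j, (i' : ℕ) = (i : ℕ) + 1 → side i' ≠ side i)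
    (hlast : side ⟨j - 1, by omega⟩ = true)
    (c : G) (hc : c ∈ C) (g : G) (hg : g = (List.ofFn z).prod * c) :
    ∀ b ∈ B, ∀ b' ∈ B,
      sInf ((fun c'' => wordNorm (SA ∪ SB) (b'⁻¹ * c'')) '' (C : Set G)) ≤
        wordNorm (SA ∪ SB) (b⁻¹ * g * b') := by
  intro b hb b' hb'
  classical
  obtain ⟨hCA, hCB, htop, -⟩ := id hG
  have hcA : Countable ↥A := by
    rw [← hSAgen]; exact AmalgAux.countable_closure hSAfin.countable
  have hcB : Countable ↥B := by
    rw [← hSBgen]; exact AmalgAux.countable_closure hSBfin.countable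
  have hsymm : ∀ s ∈ SA ∪ SB, s⁻¹ ∈ SA ∪ SB := by
    rintro s (h | h)
    exacts [Or.inl (hSAsymm s h), Or.inr (hSBsymm s h)]
  have hclos : Subgroup.closure (SA ∪ SB) = ⊤ := by
    rw [Subgroup.closure_union, hSAgen, hSBgen]
    rw [← htop, Subgroup.closure_union, Subgroup.closure_eq, Subgroup.closure_eq]
  obtain ⟨l, hlen, hmemS, hprod⟩ :=
    AmalgAux.exists_min_word (AmalgAux.exists_word_of_closure hsymm hclos (b⁻¹ * g * b'))
  have hmemAB : ∀ y ∈ l, y ∈ ((A : Set G) ∪ (B : Set G)) := by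
    intro y hy
    rcases hmemS y hy with h | h
    · exact Or.inl (by rw [← hSAgen]; exact Subgroup.subset_closure h)
    · exact Or.inr (by rw [← hSBgen]; exact Subgroup.subset_closure h)
  have hAlt := AmalgAux.alt_ofFn j hj z side hA hB hnotC halt
  rw [hlast] at hAlt
  have hW0 : AmalgAux.IsW A B C (g⁻¹ * b) := by
    rw [hg]
    exact AmalgAux.isW_ginv_mul hCA hCB hAlt hc hb
  have hend : ¬ AmalgAux.IsW A B C ((g⁻¹ * b) * l.prod) := by
    rw [hprod]
    have he : g⁻¹ * b * (b⁻¹ * g * b') = b' := by group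
    rw [he]
    exact AmalgAux.not_isW_of_mem_B hG hcA hcB hb'
  obtain ⟨l₂, hsuf, c'', hc'', heq⟩ :=
    AmalgAux.crossing_list hG hcA hcB l (g⁻¹ * b) hmemAB hW0 hend
  have heq' : c'' * l₂.prod = b' := by
    rw [heq, hprod]; group
  have hinv : b'⁻¹ * c'' = (l₂.map (fun y => y⁻¹)).reverse.prod := by
    rw [← List.prod_inv_reverse, ← heq']
    group
  have hmem2 : ∀ y ∈ (l₂.map (fun y => y⁻¹)).reverse, y ∈ SA ∪ SB := by
    intro y hy
    rw [List.mem_reverse, List.mem_map] at hy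
    obtain ⟨x, hx, rfl⟩ := hy
    exact hsymm x (hmemS x (hsuf.subset hx))
  have hle2 : wordNorm (SA ∪ SB) (b'⁻¹ * c'') ≤ l₂.length := by
    rw [hinv]
    have h3 := AmalgAux.wordNorm_le _ hmem2
    simpa using h3
  have h1 : sInf ((fun c'' => wordNorm (SA ∪ SB) (b'⁻¹ * c'')) '' (C : Set G)) ≤
      wordNorm (SA ∪ SB) (b'⁻¹ * c'') := Nat.sInf_le ⟨c'', hc'', rfl⟩
  have h2 : l₂.length ≤ l.length := hsuf.length_le
  omega
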